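/- Let U → X → (Y, Z) be a Markov chain and K a deterministic function of X taking at most p values. Then I(U;Y) − I(U;Z) ≤ max_k [I(X;Y|K=k) − I(X;Z|K=k) + I(X;Z|U,K=k) − I(X;Y|U,K=k)] + 2·log₂ p. -/

import Mathlib

open Finset

/-- Mutual information (in bits) of a finite joint pmf `j` on `S × T`. -/
noncomputable def mi {S T : Type*} [Fintype S] [Fintype T] (j : S → T → ℝ) : ℝ :=
  ∑ s, ∑ t, j s t * Real.logb 2 (j s t / ((∑ t', j s t') * (∑ s', j s' t)))

/-- Conditional mutual information `I(S; T | U)` for a joint pmf `j` on `U × S × T`. -/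
noncomputable def condMI {U S T : Type*} [Fintype U] [Fintype S] [Fintype T]
    (j : U → S → T → ℝ) : ℝ :=
  ∑ u, (∑ s, ∑ t, j u s t) *
    mi (fun s t => j u s t / (∑ s', ∑ t', j u s' t'))


noncomputable def phi (x : ℝ) : ℝ := x * Real.logb 2 x

lemma phi_zero : phi 0 = 0 := by simp [phi]

lemma phi_ite (P : Prop) [Decidable P] (x : ℝ) :
    phi (if P then x else 0) = if P then phi x else 0 := by
  split_ifs <;> simp [phi]

lemma sum_ite_const {ι : Type*} (s : Finset ι) (P : Prop) [Decidable P] (g : ι → ℝ) :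
    (∑ i ∈ s, if P then g i else 0) = if P then ∑ i ∈ s, g i else 0 := by
  split_ifs <;> simp

lemma phi_div {a c : ℝ} (ha : 0 ≤ a) (hc : 0 < c) :
    phi (a / c) = phi a / c - a / c * Real.logb 2 c := by
  rcases ha.eq_or_lt with h | h
  · simp [phi, ← h]
  · rw [phi, phi, Real.logb_div (ne_of_gt h) (ne_of_gt hc)]
    field_simp

lemma mi_eq {S T : Type*} [Fintype S] [Fintype T] (j : S → T → ℝ) (h : ∀ s t, 0 ≤ j s t) :
    mi j = (∑ s, ∑ t, phi (j s t)) - (∑ s, phi (∑ t, j s t)) - (∑ t, phi (∑ s, j s t)) := by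
  have key : ∀ s t, j s t * Real.logb 2 (j s t / ((∑ t', j s t') * (∑ s', j s' t)))
      = phi (j s t) - j s t * Real.logb 2 (∑ t', j s t')
        - j s t * Real.logb 2 (∑ s', j s' t) := by
    intro s t
    rcases (h s t).eq_or_lt with h0 | h0
    · simp [← h0, phi]
    · have hr : 0 < ∑ t', j s t' :=
        lt_of_lt_of_le h0 (Finset.single_le_sum (fun t' _ => h s t') (mem_univ t))
      have hc : 0 < ∑ s', j s' t :=
        lt_of_lt_of_le h0 (Finset.single_le_sum (fun s' _ => h s' t) (mem_univ s))
      rw [Real.logb_div (ne_of_gt h0) (ne_of_gt (mul_pos hr hc)),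
        Real.logb_mul (ne_of_gt hr) (ne_of_gt hc), phi]
      ring
  rw [mi]
  rw [Finset.sum_congr rfl fun s _ => Finset.sum_congr rfl fun t _ => key s t]
  simp only [Finset.sum_sub_distrib]
  congr 1
  · congr 1
    exact Finset.sum_congr rfl fun s _ => by rw [phi, Finset.sum_mul]
  · rw [Finset.sum_comm]
    exact Finset.sum_congr rfl fun t _ => by rw [phi, Finset.sum_mul]

lemma sum_comm3 {S T : Type*} [Fintype S] [Fintype T] (g : S → T → ℝ) :
    (∑ s, ∑ t, g s t) = ∑ t, ∑ s, g s t := Finset.sum_comm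

lemma mi_div {S T : Type*} [Fintype S] [Fintype T] (j : S → T → ℝ) (h : ∀ s t, 0 ≤ j s t)
    {c : ℝ} (hc : 0 < c) :
    c * mi (fun s t => j s t / c) = mi j + (∑ s, ∑ t, j s t) * Real.logb 2 c := by
  have h' : ∀ s t, 0 ≤ j s t / c := fun s t => div_nonneg (h s t) hc.le
  rw [mi_eq _ h', mi_eq _ h]
  have hr : ∀ s, (0:ℝ) ≤ ∑ t, j s t := fun s => Finset.sum_nonneg fun t _ => h s t
  have hcl : ∀ t, (0:ℝ) ≤ ∑ s, j s t := fun t => Finset.sum_nonneg fun s _ => h s t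
  have e1 : ∀ (s : S) (t : T), phi (j s t / c) = phi (j s t) / c - j s t / c * Real.logb 2 c :=
    fun s t => phi_div (h s t) hc
  have e2 : ∀ s : S, phi ((∑ t, j s t) / c) = phi (∑ t, j s t) / c - (∑ t, j s t) / c * Real.logb 2 c :=
    fun s => phi_div (hr s) hc
  have e3 : ∀ t : T, phi ((∑ s, j s t) / c) = phi (∑ s, j s t) / c - (∑ s, j s t) / c * Real.logb 2 c :=
    fun t => phi_div (hcl t) hc
  simp only [e1, ← Finset.sum_div, e2, e3, Finset.sum_sub_distrib, ← Finset.sum_mul]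
  rw [show (∑ t, ∑ s, j s t) = ∑ s, ∑ t, j s t from (sum_comm3 j).symm]
  field_simp
  ring

lemma condMI_eq {V S T : Type*} [Fintype V] [Fintype S] [Fintype T]
    (j : V → S → T → ℝ) (h : ∀ u s t, 0 ≤ j u s t) :
    condMI j = (∑ u, ∑ s, ∑ t, phi (j u s t)) + (∑ u, phi (∑ s, ∑ t, j u s t))
      - (∑ u, ∑ s, phi (∑ t, j u s t)) - (∑ u, ∑ t, phi (∑ s, j u s t)) := by
  rw [condMI]
  have key : ∀ u, (∑ s, ∑ t, j u s t) * mi (fun s t => j u s t / (∑ s', ∑ t', j u s' t'))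
      = (∑ s, ∑ t, phi (j u s t)) + phi (∑ s, ∑ t, j u s t)
        - (∑ s, phi (∑ t, j u s t)) - (∑ t, phi (∑ s, j u s t)) := by
    intro u
    set m := ∑ s, ∑ t, j u s t with hm
    have hm0 : 0 ≤ m := Finset.sum_nonneg fun s _ => Finset.sum_nonneg fun t _ => h u s t
    rcases hm0.eq_or_lt with h0 | h0
    · -- all entries vanish
      have hz : ∀ s t, j u s t = 0 := by
        intro s t
        have h1 : (∑ t, j u s t) = 0 := by
          have := (Finset.sum_eq_zero_iff_of_nonneg
            (fun s _ => Finset.sum_nonneg fun t _ => h u s t)).mp h0.symm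
          exact this s (mem_univ s)
        exact (Finset.sum_eq_zero_iff_of_nonneg (fun t _ => h u s t)).mp h1 t (mem_univ t)
      simp [hz, ← h0, phi]
    · have := mi_div (fun s t => j u s t) (h u) h0
      calc m * mi (fun s t => j u s t / m)
          = mi (fun s t => j u s t) + m * Real.logb 2 m := by rw [this]
        _ = _ := by
            rw [mi_eq _ (h u), phi]
            ring
  rw [Finset.sum_congr rfl fun u _ => key u]
  simp only [Finset.sum_sub_distrib, Finset.sum_add_distrib]

lemma condMI_div {V S T : Type*} [Fintype V] [Fintype S] [Fintype T]
    (j : V → S → T → ℝ) (h : ∀ u s t, 0 ≤ j u s t) {c : ℝ} (hc : 0 < c) :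
    c * condMI (fun u s t => j u s t / c) = condMI j := by
  have h' : ∀ u s t, 0 ≤ j u s t / c := fun u s t => div_nonneg (h u s t) hc.le
  rw [condMI_eq _ h', condMI_eq _ h]
  have hj : ∀ u s, (0:ℝ) ≤ ∑ t, j u s t := fun u s => Finset.sum_nonneg fun t _ => h u s t
  have hcl : ∀ u t, (0:ℝ) ≤ ∑ s, j u s t := fun u t => Finset.sum_nonneg fun s _ => h u s t
  have hmm : ∀ u, (0:ℝ) ≤ ∑ s, ∑ t, j u s t :=
    fun u => Finset.sum_nonneg fun s _ => hj u s
  have e1 : ∀ u s t, phi (j u s t / c) = phi (j u s t) / c - j u s t / c * Real.logb 2 c :=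
    fun u s t => phi_div (h u s t) hc
  have e2 : ∀ u s, phi ((∑ t, j u s t) / c)
      = phi (∑ t, j u s t) / c - (∑ t, j u s t) / c * Real.logb 2 c :=
    fun u s => phi_div (hj u s) hc
  have e3 : ∀ u t, phi ((∑ s, j u s t) / c)
      = phi (∑ s, j u s t) / c - (∑ s, j u s t) / c * Real.logb 2 c :=
    fun u t => phi_div (hcl u t) hc
  have e4 : ∀ u, phi ((∑ s, ∑ t, j u s t) / c)
      = phi (∑ s, ∑ t, j u s t) / c - (∑ s, ∑ t, j u s t) / c * Real.logb 2 c :=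
    fun u => phi_div (hmm u) hc
  simp only [e1, ← Finset.sum_div, e2, e3, e4, Finset.sum_sub_distrib, ← Finset.sum_mul]
  rw [show (∑ u, ∑ t, ∑ s, j u s t) = ∑ u, ∑ s, ∑ t, j u s t from
    Finset.sum_congr rfl fun u _ => (sum_comm3 (j u)).symm]
  field_simp
  ring

lemma ent_slice {ι : Type*} [Fintype ι] (a : ι → ℝ) (ha : ∀ i, 0 ≤ a i) :
    phi (∑ i, a i) - (∑ i, phi (a i)) ≤ (∑ i, a i) * Real.logb 2 (Fintype.card ι) := by
  set s := ∑ i, a i with hs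
  have hs0 : 0 ≤ s := Finset.sum_nonneg fun i _ => ha i
  rcases hs0.eq_or_lt with h0 | h0
  · have hz : ∀ i, a i = 0 :=
      fun i => (Finset.sum_eq_zero_iff_of_nonneg (fun i _ => ha i)).mp h0.symm i (mem_univ i)
    simp [hz, ← h0, phi]
  · -- card is positive
    have hcard : 0 < (Fintype.card ι : ℝ) := by
      have : Nonempty ι := by
        by_contra hne
        rw [not_nonempty_iff] at hne
        rw [hs] at h0
        simp [Finset.univ_eq_empty] at h0
      exact_mod_cast Fintype.card_pos
    set n : ℝ := (Fintype.card ι : ℝ) with hn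
    -- key : a i * log (s / a i) ≤ a i * log n + (s / n - a i) * log 2 ... we work with natural log
    have key : ∀ i, a i * Real.log (s / (a i * n)) ≤ s / n - a i := by
      intro i
      rcases (ha i).eq_or_lt with hi | hi
      · simp [← hi]
        positivity
      · have hx : 0 < s / (a i * n) := div_pos h0 (mul_pos hi hcard)
        have := Real.log_le_sub_one_of_pos hx
        calc a i * Real.log (s / (a i * n)) ≤ a i * (s / (a i * n) - 1) := by
              exact mul_le_mul_of_nonneg_left this (ha i)
          _ = s / n - a i := by field_simp
    have sum_key : ∑ i, a i * Real.log (s / (a i * n)) ≤ 0 := by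
      calc ∑ i, a i * Real.log (s / (a i * n)) ≤ ∑ i : ι, (s / n - a i) :=
            Finset.sum_le_sum fun i _ => key i
        _ = (Fintype.card ι : ℝ) * (s / n) - s := by
            rw [Finset.sum_sub_distrib, Finset.sum_const, Finset.card_univ]
            simp [hs]
        _ = 0 := by field_simp; simp [hn]
    -- expand the log of quotient
    have expand : ∀ i, a i * Real.log (s / (a i * n))
        = a i * Real.log s - a i * Real.log (a i) - a i * Real.log n := by
      intro i
      rcases (ha i).eq_or_lt with hi | hi
      · simp [← hi]
      · rw [Real.log_div (ne_of_gt h0) (ne_of_gt (mul_pos hi hcard)),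
          Real.log_mul (ne_of_gt hi) (ne_of_gt hcard)]
        ring
    rw [Finset.sum_congr rfl fun i _ => expand i] at sum_key
    simp only [Finset.sum_sub_distrib, ← Finset.sum_mul] at sum_key
    -- translate to logb
    have hlog2 : 0 < Real.log 2 := Real.log_pos one_lt_two
    have hφ : phi s - (∑ i, phi (a i)) - s * Real.logb 2 n
        = ((∑ i, a i) * Real.log s - (∑ i, a i * Real.log (a i)) - (∑ i, a i) * Real.log n) / Real.log 2 := by
      simp only [phi, Real.logb, hs]
      rw [Finset.sum_congr rfl fun i _ => (show a i * (Real.log (a i) / Real.log 2)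
        = (a i * Real.log (a i)) / Real.log 2 by ring), ← Finset.sum_div]
      field_simp
    have : phi s - (∑ i, phi (a i)) - s * Real.logb 2 n ≤ 0 := by
      rw [hφ]
      apply div_nonpos_of_nonpos_of_nonneg _ hlog2.le
      convert sum_key using 2 <;> rw [← Finset.sum_mul]
    linarith

lemma ent_marg {ι κ : Type*} [Fintype ι] [Fintype κ] (m : ι → κ → ℝ)
    (h : ∀ i j, 0 ≤ m i j) :
    (∑ i, ∑ j, phi (m i j)) ≤ ∑ j, phi (∑ i, m i j) := by
  rw [sum_comm3]
  apply Finset.sum_le_sum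
  intro j _
  have hcol : ∀ i, m i j ≤ ∑ i', m i' j :=
    fun i => Finset.single_le_sum (fun i' _ => h i' j) (mem_univ i)
  have hcol0 : (0:ℝ) ≤ ∑ i', m i' j := Finset.sum_nonneg fun i _ => h i j
  calc (∑ i, phi (m i j)) ≤ ∑ i, m i j * Real.logb 2 (∑ i', m i' j) := by
        apply Finset.sum_le_sum
        intro i _
        rcases (h i j).eq_or_lt with hi | hi
        · simp [phi, ← hi]
        · exact mul_le_mul_of_nonneg_left
            (Real.logb_le_logb_of_le one_lt_two hi (hcol i)) (h i j)
    _ = phi (∑ i, m i j) := by rw [phi, Finset.sum_mul]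

lemma markov_ent {A B C : Type*} [Fintype A] [Fintype B] [Fintype C]
    (a : A → B → C → ℝ) (ha : ∀ i x j, 0 ≤ a i x j)
    (hM : ∀ i x j, a i x j * (∑ i', ∑ j', a i' x j') = (∑ j', a i x j') * (∑ i', a i' x j)) :
    (∑ i, ∑ x, ∑ j, phi (a i x j))
      = (∑ i, ∑ x, phi (∑ j, a i x j)) + (∑ x, ∑ j, phi (∑ i, a i x j))
        - ∑ x, phi (∑ i', ∑ j', a i' x j') := by
  have key : ∀ i x j, phi (a i x j)
      = a i x j * Real.logb 2 (∑ j', a i x j') + a i x j * Real.logb 2 (∑ i', a i' x j)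
        - a i x j * Real.logb 2 (∑ i', ∑ j', a i' x j') := by
    intro i x j
    rcases (ha i x j).eq_or_lt with h0 | h0
    · simp [phi, ← h0]
    · have hb : 0 < ∑ i', ∑ j', a i' x j' := by
        calc (0:ℝ) < a i x j := h0
          _ ≤ ∑ j', a i x j' := Finset.single_le_sum (fun j' _ => ha i x j') (mem_univ j)
          _ ≤ ∑ i', ∑ j', a i' x j' :=
            Finset.single_le_sum (fun i' _ => Finset.sum_nonneg fun j' _ => ha i' x j')
              (mem_univ i)
      have hc : 0 < ∑ j', a i x j' :=
        lt_of_lt_of_le h0 (Finset.single_le_sum (fun j' _ => ha i x j') (mem_univ j))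
      have hd : 0 < ∑ i', a i' x j :=
        lt_of_lt_of_le h0 (Finset.single_le_sum (fun i' _ => ha i' x j) (mem_univ i))
      have : a i x j = (∑ j', a i x j') * (∑ i', a i' x j) / (∑ i', ∑ j', a i' x j') := by
        field_simp
        linarith [hM i x j]
      rw [phi]
      nth_rewrite 2 [this]
      rw [Real.logb_div (ne_of_gt (mul_pos hc hd)) (ne_of_gt hb),
        Real.logb_mul (ne_of_gt hc) (ne_of_gt hd)]
      ring
  rw [Finset.sum_congr rfl fun i _ => Finset.sum_congr rfl fun x _ =>
    Finset.sum_congr rfl fun j _ => key i x j]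
  simp only [Finset.sum_add_distrib, Finset.sum_sub_distrib]
  have s1 : (∑ i, ∑ x, ∑ j, a i x j * Real.logb 2 (∑ j', a i x j'))
      = ∑ i, ∑ x, phi (∑ j, a i x j) :=
    Finset.sum_congr rfl fun i _ => Finset.sum_congr rfl fun x _ => by
      rw [phi, Finset.sum_mul]
  have s2 : (∑ i, ∑ x, ∑ j, a i x j * Real.logb 2 (∑ i', a i' x j))
      = ∑ x, ∑ j, phi (∑ i, a i x j) := by
    rw [sum_comm3]
    refine Finset.sum_congr rfl fun x _ => ?_
    rw [sum_comm3]
    exact Finset.sum_congr rfl fun j _ => by rw [phi, Finset.sum_mul]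
  have s3 : (∑ i, ∑ x, ∑ j, a i x j * Real.logb 2 (∑ i', ∑ j', a i' x j'))
      = ∑ x, phi (∑ i', ∑ j', a i' x j') := by
    rw [sum_comm3]
    refine Finset.sum_congr rfl fun x _ => ?_
    rw [phi, Finset.sum_mul]
    exact Finset.sum_congr rfl fun i _ => by rw [Finset.sum_mul]
  rw [s1, s2, s3]

section Swaps
variable {A B C D : Type*} [Fintype A] [Fintype B] [Fintype C] [Fintype D]

lemma sw12₃ (g : A → B → C → ℝ) :
    (∑ a, ∑ b, ∑ c, g a b c) = ∑ b, ∑ a, ∑ c, g a b c :=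
  sum_comm3 (fun a b => ∑ c, g a b c)

lemma sw23₃ (g : A → B → C → ℝ) :
    (∑ a, ∑ b, ∑ c, g a b c) = ∑ a, ∑ c, ∑ b, g a b c :=
  Finset.sum_congr rfl fun a _ => sum_comm3 (g a)

lemma sw12₄ (g : A → B → C → D → ℝ) :
    (∑ a, ∑ b, ∑ c, ∑ d, g a b c d) = ∑ b, ∑ a, ∑ c, ∑ d, g a b c d :=
  sum_comm3 (fun a b => ∑ c, ∑ d, g a b c d)

lemma sw23₄ (g : A → B → C → D → ℝ) :
    (∑ a, ∑ b, ∑ c, ∑ d, g a b c d) = ∑ a, ∑ c, ∑ b, ∑ d, g a b c d :=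
  Finset.sum_congr rfl fun a _ => sum_comm3 (fun b c => ∑ d, g a b c d)

lemma sw34₄ (g : A → B → C → D → ℝ) :
    (∑ a, ∑ b, ∑ c, ∑ d, g a b c d) = ∑ a, ∑ b, ∑ d, ∑ c, g a b c d :=
  Finset.sum_congr rfl fun a _ => Finset.sum_congr rfl fun b _ => sum_comm3 (g a b)

lemma sum4_eq_zero (g : A → B → C → D → ℝ) (h : ∀ a b c d, 0 ≤ g a b c d)
    (h0 : (∑ a, ∑ b, ∑ c, ∑ d, g a b c d) = 0) : ∀ a b c d, g a b c d = 0 := by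
  intro a b c d
  refine le_antisymm ?_ (h a b c d)
  calc g a b c d ≤ ∑ d', g a b c d' :=
        Finset.single_le_sum (fun d' _ => h a b c d') (mem_univ d)
    _ ≤ ∑ c', ∑ d', g a b c' d' :=
        Finset.single_le_sum (fun c' _ => Finset.sum_nonneg fun d' _ => h a b c' d')
          (mem_univ c)
    _ ≤ ∑ b', ∑ c', ∑ d', g a b' c' d' :=
        Finset.single_le_sum (fun b' _ => Finset.sum_nonneg fun c' _ =>
          Finset.sum_nonneg fun d' _ => h a b' c' d') (mem_univ b)
    _ ≤ ∑ a', ∑ b', ∑ c', ∑ d', g a' b' c' d' :=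
        Finset.single_le_sum (fun a' _ => Finset.sum_nonneg fun b' _ =>
          Finset.sum_nonneg fun c' _ => Finset.sum_nonneg fun d' _ => h a' b' c' d')
          (mem_univ a)
    _ = 0 := h0

end Swaps

lemma sum_fin_ite {ι : Type*} [Fintype ι] [DecidableEq ι] (b : ι) (c : ℝ) :
    (∑ k : ι, if b = k then c else 0) = c := by simp


theorem stmt_19 {U X Y Z : Type*} [Fintype U] [Fintype X] [Fintype Y] [Fintype Z]
    (p : ℕ) (hp : 0 < p)
    (w : U → X → Y → Z → ℝ)  -- joint pmf of (U, X, Y, Z)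
    (hw0 : ∀ u x y z, 0 ≤ w u x y z)
    (hw1 : ∑ u, ∑ x, ∑ y, ∑ z, w u x y z = 1)
    -- Markov chain U → X → (Y, Z):  P(u,x,y,z)·P(x) = P(u,x)·P(x,y,z)
    (hMarkov : ∀ u x y z,
      w u x y z * (∑ u', ∑ y', ∑ z', w u' x y' z') =
        (∑ y', ∑ z', w u x y' z') * (∑ u', w u' x y z))
    (f : X → Fin p)  -- K = f(X)
    :
    mi (fun u y => ∑ x, ∑ z, w u x y z) - mi (fun u z => ∑ x, ∑ y, w u x y z) ≤
      (Finset.univ.sup' ⟨⟨0, hp⟩, Finset.mem_univ _⟩ (fun k =>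
        (mi (fun x y => (∑ u, ∑ z, if f x = k then w u x y z else 0) /
              (∑ u, ∑ x, ∑ y, ∑ z, if f x = k then w u x y z else 0))
         - mi (fun x z => (∑ u, ∑ y, if f x = k then w u x y z else 0) /
              (∑ u, ∑ x, ∑ y, ∑ z, if f x = k then w u x y z else 0)))
        + (condMI (fun u x z => (∑ y, if f x = k then w u x y z else 0) /
              (∑ u, ∑ x, ∑ y, ∑ z, if f x = k then w u x y z else 0))
         - condMI (fun u x y => (∑ z, if f x = k then w u x y z else 0) /
              (∑ u, ∑ x, ∑ y, ∑ z, if f x = k then w u x y z else 0)))))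
      + 2 * Real.logb 2 p := by
  classical
  set F : Fin p → ℝ := fun k =>
        (mi (fun x y => (∑ u, ∑ z, if f x = k then w u x y z else 0) /
              (∑ u, ∑ x, ∑ y, ∑ z, if f x = k then w u x y z else 0))
         - mi (fun x z => (∑ u, ∑ y, if f x = k then w u x y z else 0) /
              (∑ u, ∑ x, ∑ y, ∑ z, if f x = k then w u x y z else 0)))
        + (condMI (fun u x z => (∑ y, if f x = k then w u x y z else 0) /
              (∑ u, ∑ x, ∑ y, ∑ z, if f x = k then w u x y z else 0))
         - condMI (fun u x y => (∑ z, if f x = k then w u x y z else 0) /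
              (∑ u, ∑ x, ∑ y, ∑ z, if f x = k then w u x y z else 0))) with hF
  have hP0 : ∀ k : Fin p, (0:ℝ) ≤ ∑ u, ∑ x, ∑ y, ∑ z, if f x = k then w u x y z else 0 := by
    intro k
    refine Finset.sum_nonneg fun u _ => Finset.sum_nonneg fun x _ =>
      Finset.sum_nonneg fun y _ => Finset.sum_nonneg fun z _ => ?_
    split_ifs
    · exact hw0 u x y z
    · exact le_rfl
  have hite0 : ∀ (k : Fin p) u x y z, (0:ℝ) ≤ (if f x = k then w u x y z else 0) := by
    intro k u x y z
    split_ifs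
    · exact hw0 u x y z
    · exact le_rfl
  have h3 : ∀ k : Fin p,
      (∑ u, ∑ x, ∑ y, ∑ z, if f x = k then w u x y z else 0) * F k =
      (mi (fun x y => ∑ u, ∑ z, if f x = k then w u x y z else 0)
        - mi (fun x z => ∑ u, ∑ y, if f x = k then w u x y z else 0))
      + (condMI (fun u x z => ∑ y, if f x = k then w u x y z else 0)
        - condMI (fun u x y => ∑ z, if f x = k then w u x y z else 0)) := by
    intro k
    rcases (hP0 k).eq_or_lt with h0 | h0
    · have hz : ∀ u x y z, (if f x = k then w u x y z else 0) = 0 :=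
        sum4_eq_zero _ (hite0 k) h0.symm
      simp only [hF, hz]
      simp [mi, condMI]
    · simp only [hF]
      rw [mul_add, mul_sub, mul_sub]
      rw [mi_div (fun x y => ∑ u, ∑ z, if f x = k then w u x y z else 0)
            (fun x y => Finset.sum_nonneg fun u _ => Finset.sum_nonneg fun z _ => hite0 k u x y z) h0,
          mi_div (fun x z => ∑ u, ∑ y, if f x = k then w u x y z else 0)
            (fun x z => Finset.sum_nonneg fun u _ => Finset.sum_nonneg fun y _ => hite0 k u x y z) h0,
          condMI_div (fun u x z => ∑ y, if f x = k then w u x y z else 0)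
            (fun u x z => Finset.sum_nonneg fun y _ => hite0 k u x y z) h0,
          condMI_div (fun u x y => ∑ z, if f x = k then w u x y z else 0)
            (fun u x y => Finset.sum_nonneg fun z _ => hite0 k u x y z) h0]
      have m1 : (∑ x, ∑ y, ∑ u, ∑ z, if f x = k then w u x y z else 0)
          = ∑ u, ∑ x, ∑ y, ∑ z, if f x = k then w u x y z else 0 := by
        rw [sw23₄ (fun x y u z => if f x = k then w u x y z else 0),
            sw12₄ (fun x u y z => if f x = k then w u x y z else 0)]
      have m2 : (∑ x, ∑ z, ∑ u, ∑ y, if f x = k then w u x y z else 0)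
          = ∑ u, ∑ x, ∑ y, ∑ z, if f x = k then w u x y z else 0 := by
        rw [sw23₄ (fun x z u y => if f x = k then w u x y z else 0),
            sw12₄ (fun x u z y => if f x = k then w u x y z else 0),
            sw34₄ (fun u x z y => if f x = k then w u x y z else 0)]
      rw [m1, m2]
      ring
  have h1 : mi (fun u y => ∑ x, ∑ z, w u x y z)
      = (∑ u, ∑ y, phi (∑ x, ∑ z, w u x y z)) - (∑ u, phi (∑ x, ∑ y, ∑ z, w u x y z))
        - (∑ y, phi (∑ u, ∑ x, ∑ z, w u x y z)) := by
    rw [mi_eq _ (fun u y => Finset.sum_nonneg fun x _ => Finset.sum_nonneg fun z _ => hw0 u x y z)]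
    rw [show (∑ u, phi (∑ y, ∑ x, ∑ z, w u x y z)) = ∑ u, phi (∑ x, ∑ y, ∑ z, w u x y z) from
      Finset.sum_congr rfl fun u _ => by rw [sw12₃ (fun y x z => w u x y z)]]
  have h2 : mi (fun u z => ∑ x, ∑ y, w u x y z)
      = (∑ u, ∑ z, phi (∑ x, ∑ y, w u x y z)) - (∑ u, phi (∑ x, ∑ y, ∑ z, w u x y z))
        - (∑ z, phi (∑ u, ∑ x, ∑ y, w u x y z)) := by
    rw [mi_eq _ (fun u z => Finset.sum_nonneg fun x _ => Finset.sum_nonneg fun y _ => hw0 u x y z)]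
    rw [show (∑ u, phi (∑ z, ∑ x, ∑ y, w u x y z)) = ∑ u, phi (∑ x, ∑ y, ∑ z, w u x y z) from
      Finset.sum_congr rfl fun u _ => by
        rw [sw12₃ (fun z x y => w u x y z), sw23₃ (fun x z y => w u x y z)]]
  have h4a : (∑ k : Fin p, mi (fun x y => ∑ u, ∑ z, if f x = k then w u x y z else 0))
      = (∑ x, ∑ y, phi (∑ u, ∑ z, w u x y z)) - (∑ x, phi (∑ u, ∑ y, ∑ z, w u x y z))
        - (∑ k : Fin p, ∑ y, phi (∑ x, if f x = k then ∑ u, ∑ z, w u x y z else 0)) := by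
    have expand : ∀ k : Fin p, mi (fun x y => ∑ u, ∑ z, if f x = k then w u x y z else 0)
        = (∑ x, ∑ y, if f x = k then phi (∑ u, ∑ z, w u x y z) else 0)
          - (∑ x, if f x = k then phi (∑ u, ∑ y, ∑ z, w u x y z) else 0)
          - (∑ y, phi (∑ x, if f x = k then ∑ u, ∑ z, w u x y z else 0)) := by
      intro k
      rw [mi_eq _ (fun x y => Finset.sum_nonneg fun u _ => Finset.sum_nonneg fun z _ =>
        hite0 k u x y z)]
      congr 1
      · congr 1
        · exact Finset.sum_congr rfl fun x _ => Finset.sum_congr rfl fun y _ => by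
            simp only [sum_ite_const, phi_ite]
        · refine Finset.sum_congr rfl fun x _ => ?_
          simp only [sum_ite_const, phi_ite]
          rw [show (∑ y, ∑ u, ∑ z, w u x y z) = ∑ u, ∑ y, ∑ z, w u x y z from
            sw12₃ (fun y u z => w u x y z)]
      · exact Finset.sum_congr rfl fun y _ => by
          rw [show (∑ x, ∑ u, ∑ z, if f x = k then w u x y z else 0)
              = ∑ x, if f x = k then ∑ u, ∑ z, w u x y z else 0 from
            Finset.sum_congr rfl fun x _ => by simp only [sum_ite_const]]
    rw [Finset.sum_congr rfl fun k _ => expand k]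
    simp only [Finset.sum_sub_distrib]
    congr 1
    congr 1
    · rw [sw12₃ (fun (k : Fin p) x y => if f x = k then phi (∑ u, ∑ z, w u x y z) else 0),
        sw23₃ (fun x (k : Fin p) y => if f x = k then phi (∑ u, ∑ z, w u x y z) else 0)]
      exact Finset.sum_congr rfl fun x _ => Finset.sum_congr rfl fun y _ =>
        sum_fin_ite (f x) _
    · rw [sum_comm3 (fun (k : Fin p) x => if f x = k then phi (∑ u, ∑ y, ∑ z, w u x y z) else 0)]
      exact Finset.sum_congr rfl fun x _ => sum_fin_ite (f x) _
  have h4b : (∑ k : Fin p, mi (fun x z => ∑ u, ∑ y, if f x = k then w u x y z else 0))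
      = (∑ x, ∑ z, phi (∑ u, ∑ y, w u x y z)) - (∑ x, phi (∑ u, ∑ y, ∑ z, w u x y z))
        - (∑ k : Fin p, ∑ z, phi (∑ x, if f x = k then ∑ u, ∑ y, w u x y z else 0)) := by
    have expand : ∀ k : Fin p, mi (fun x z => ∑ u, ∑ y, if f x = k then w u x y z else 0)
        = (∑ x, ∑ z, if f x = k then phi (∑ u, ∑ y, w u x y z) else 0)
          - (∑ x, if f x = k then phi (∑ u, ∑ y, ∑ z, w u x y z) else 0)
          - (∑ z, phi (∑ x, if f x = k then ∑ u, ∑ y, w u x y z else 0)) := by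
      intro k
      rw [mi_eq _ (fun x z => Finset.sum_nonneg fun u _ => Finset.sum_nonneg fun y _ =>
        hite0 k u x y z)]
      congr 1
      · congr 1
        · exact Finset.sum_congr rfl fun x _ => Finset.sum_congr rfl fun z _ => by
            simp only [sum_ite_const, phi_ite]
        · refine Finset.sum_congr rfl fun x _ => ?_
          simp only [sum_ite_const, phi_ite]
          rw [show (∑ z, ∑ u, ∑ y, w u x y z) = ∑ u, ∑ y, ∑ z, w u x y z from by
            rw [sw12₃ (fun z u y => w u x y z), sw23₃ (fun u z y => w u x y z)]]
      · exact Finset.sum_congr rfl fun z _ => by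
          rw [show (∑ x, ∑ u, ∑ y, if f x = k then w u x y z else 0)
              = ∑ x, if f x = k then ∑ u, ∑ y, w u x y z else 0 from
            Finset.sum_congr rfl fun x _ => by simp only [sum_ite_const]]
    rw [Finset.sum_congr rfl fun k _ => expand k]
    simp only [Finset.sum_sub_distrib]
    congr 1
    congr 1
    · rw [sw12₃ (fun (k : Fin p) x z => if f x = k then phi (∑ u, ∑ y, w u x y z) else 0),
        sw23₃ (fun x (k : Fin p) z => if f x = k then phi (∑ u, ∑ y, w u x y z) else 0)]
      exact Finset.sum_congr rfl fun x _ => Finset.sum_congr rfl fun z _ =>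
        sum_fin_ite (f x) _
    · rw [sum_comm3 (fun (k : Fin p) x => if f x = k then phi (∑ u, ∑ y, ∑ z, w u x y z) else 0)]
      exact Finset.sum_congr rfl fun x _ => sum_fin_ite (f x) _
  have h4c : (∑ k : Fin p, condMI (fun u x z => ∑ y, if f x = k then w u x y z else 0))
      = (∑ u, ∑ x, ∑ z, phi (∑ y, w u x y z))
        + (∑ k : Fin p, ∑ u, phi (∑ x, if f x = k then ∑ y, ∑ z, w u x y z else 0))
        - (∑ u, ∑ x, phi (∑ y, ∑ z, w u x y z))
        - (∑ k : Fin p, ∑ u, ∑ z, phi (∑ x, if f x = k then ∑ y, w u x y z else 0)) := by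
    have expand : ∀ k : Fin p, condMI (fun u x z => ∑ y, if f x = k then w u x y z else 0)
        = (∑ u, ∑ x, ∑ z, if f x = k then phi (∑ y, w u x y z) else 0)
          + (∑ u, phi (∑ x, if f x = k then ∑ y, ∑ z, w u x y z else 0))
          - (∑ u, ∑ x, if f x = k then phi (∑ y, ∑ z, w u x y z) else 0)
          - (∑ u, ∑ z, phi (∑ x, if f x = k then ∑ y, w u x y z else 0)) := by
      intro k
      rw [condMI_eq _ (fun u x z => Finset.sum_nonneg fun y _ => hite0 k u x y z)]
      congr 1
      congr 1
      congr 1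
      · exact Finset.sum_congr rfl fun u _ => Finset.sum_congr rfl fun x _ =>
          Finset.sum_congr rfl fun z _ => by simp only [sum_ite_const, phi_ite]
      · refine Finset.sum_congr rfl fun u _ => ?_
        rw [show (∑ x, ∑ z, ∑ y, if f x = k then w u x y z else 0)
            = ∑ x, if f x = k then ∑ y, ∑ z, w u x y z else 0 from
          Finset.sum_congr rfl fun x _ => by
            simp only [sum_ite_const]
            rw [show (∑ z, ∑ y, w u x y z) = ∑ y, ∑ z, w u x y z from
              sum_comm3 (fun z y => w u x y z)]]
      · refine Finset.sum_congr rfl fun u _ => Finset.sum_congr rfl fun x _ => ?_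
        simp only [sum_ite_const, phi_ite]
        rw [show (∑ z, ∑ y, w u x y z) = ∑ y, ∑ z, w u x y z from
          sum_comm3 (fun z y => w u x y z)]
      · exact Finset.sum_congr rfl fun u _ => Finset.sum_congr rfl fun z _ => by
          rw [show (∑ x, ∑ y, if f x = k then w u x y z else 0)
              = ∑ x, if f x = k then ∑ y, w u x y z else 0 from
            Finset.sum_congr rfl fun x _ => by simp only [sum_ite_const]]
    rw [Finset.sum_congr rfl fun k _ => expand k]
    simp only [Finset.sum_sub_distrib, Finset.sum_add_distrib]
    congr 1
    congr 1
    congr 1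
    · rw [sw12₄ (fun (k : Fin p) u x z => if f x = k then phi (∑ y, w u x y z) else 0),
        sw23₄ (fun u (k : Fin p) x z => if f x = k then phi (∑ y, w u x y z) else 0),
        sw34₄ (fun u x (k : Fin p) z => if f x = k then phi (∑ y, w u x y z) else 0)]
      exact Finset.sum_congr rfl fun u _ => Finset.sum_congr rfl fun x _ =>
        Finset.sum_congr rfl fun z _ => sum_fin_ite (f x) _
    · rw [sw12₃ (fun (k : Fin p) u x => if f x = k then phi (∑ y, ∑ z, w u x y z) else 0),
        sw23₃ (fun u (k : Fin p) x => if f x = k then phi (∑ y, ∑ z, w u x y z) else 0)]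
      exact Finset.sum_congr rfl fun u _ => Finset.sum_congr rfl fun x _ =>
        sum_fin_ite (f x) _
  have h4d : (∑ k : Fin p, condMI (fun u x y => ∑ z, if f x = k then w u x y z else 0))
      = (∑ u, ∑ x, ∑ y, phi (∑ z, w u x y z))
        + (∑ k : Fin p, ∑ u, phi (∑ x, if f x = k then ∑ y, ∑ z, w u x y z else 0))
        - (∑ u, ∑ x, phi (∑ y, ∑ z, w u x y z))
        - (∑ k : Fin p, ∑ u, ∑ y, phi (∑ x, if f x = k then ∑ z, w u x y z else 0)) := by
    have expand : ∀ k : Fin p, condMI (fun u x y => ∑ z, if f x = k then w u x y z else 0)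
        = (∑ u, ∑ x, ∑ y, if f x = k then phi (∑ z, w u x y z) else 0)
          + (∑ u, phi (∑ x, if f x = k then ∑ y, ∑ z, w u x y z else 0))
          - (∑ u, ∑ x, if f x = k then phi (∑ y, ∑ z, w u x y z) else 0)
          - (∑ u, ∑ y, phi (∑ x, if f x = k then ∑ z, w u x y z else 0)) := by
      intro k
      rw [condMI_eq _ (fun u x y => Finset.sum_nonneg fun z _ => hite0 k u x y z)]
      congr 1
      congr 1
      congr 1
      · exact Finset.sum_congr rfl fun u _ => Finset.sum_congr rfl fun x _ =>
          Finset.sum_congr rfl fun y _ => by simp only [sum_ite_const, phi_ite]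
      · refine Finset.sum_congr rfl fun u _ => ?_
        rw [show (∑ x, ∑ y, ∑ z, if f x = k then w u x y z else 0)
            = ∑ x, if f x = k then ∑ y, ∑ z, w u x y z else 0 from
          Finset.sum_congr rfl fun x _ => by simp only [sum_ite_const]]
      · exact Finset.sum_congr rfl fun u _ => Finset.sum_congr rfl fun x _ => by
          simp only [sum_ite_const, phi_ite]
      · exact Finset.sum_congr rfl fun u _ => Finset.sum_congr rfl fun y _ => by
          rw [show (∑ x, ∑ z, if f x = k then w u x y z else 0)
              = ∑ x, if f x = k then ∑ z, w u x y z else 0 from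
            Finset.sum_congr rfl fun x _ => by simp only [sum_ite_const]]
    rw [Finset.sum_congr rfl fun k _ => expand k]
    simp only [Finset.sum_sub_distrib, Finset.sum_add_distrib]
    congr 1
    congr 1
    congr 1
    · rw [sw12₄ (fun (k : Fin p) u x y => if f x = k then phi (∑ z, w u x y z) else 0),
        sw23₄ (fun u (k : Fin p) x y => if f x = k then phi (∑ z, w u x y z) else 0),
        sw34₄ (fun u x (k : Fin p) y => if f x = k then phi (∑ z, w u x y z) else 0)]
      exact Finset.sum_congr rfl fun u _ => Finset.sum_congr rfl fun x _ =>
        Finset.sum_congr rfl fun y _ => sum_fin_ite (f x) _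
    · rw [sw12₃ (fun (k : Fin p) u x => if f x = k then phi (∑ y, ∑ z, w u x y z) else 0),
        sw23₃ (fun u (k : Fin p) x => if f x = k then phi (∑ y, ∑ z, w u x y z) else 0)]
      exact Finset.sum_congr rfl fun u _ => Finset.sum_congr rfl fun x _ =>
        sum_fin_ite (f x) _
  have h5y : (∑ u, ∑ x, ∑ y, phi (∑ z, w u x y z))
      = (∑ u, ∑ x, phi (∑ y, ∑ z, w u x y z)) + (∑ x, ∑ y, phi (∑ u, ∑ z, w u x y z))
        - ∑ x, phi (∑ u, ∑ y, ∑ z, w u x y z) := by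
    refine markov_ent (fun u x y => ∑ z, w u x y z)
      (fun u x y => Finset.sum_nonneg fun z _ => hw0 u x y z) ?_
    intro u x y
    have e : ∑ z, (w u x y z * (∑ u', ∑ y', ∑ z', w u' x y' z'))
        = ∑ z, ((∑ y', ∑ z', w u x y' z') * (∑ u', w u' x y z)) :=
      Finset.sum_congr rfl fun z _ => hMarkov u x y z
    rw [← Finset.sum_mul] at e
    rw [← Finset.mul_sum] at e
    rw [e, sum_comm3 (fun z u' => w u' x y z)]
  have h5z : (∑ u, ∑ x, ∑ z, phi (∑ y, w u x y z))
      = (∑ u, ∑ x, phi (∑ y, ∑ z, w u x y z)) + (∑ x, ∑ z, phi (∑ u, ∑ y, w u x y z))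
        - ∑ x, phi (∑ u, ∑ y, ∑ z, w u x y z) := by
    have base := markov_ent (fun u x z => ∑ y, w u x y z)
      (fun u x z => Finset.sum_nonneg fun y _ => hw0 u x y z) ?_
    · rw [base]
      congr 1
      congr 1
      · exact Finset.sum_congr rfl fun u _ => Finset.sum_congr rfl fun x _ => by
          rw [sum_comm3 (fun z y => w u x y z)]
      · exact Finset.sum_congr rfl fun x _ => by
          rw [show (∑ u, ∑ z, ∑ y, w u x y z) = ∑ u, ∑ y, ∑ z, w u x y z from
            Finset.sum_congr rfl fun u _ => sum_comm3 (fun z y => w u x y z)]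
    · intro u x z
      have e : ∑ y, (w u x y z * (∑ u', ∑ y', ∑ z', w u' x y' z'))
          = ∑ y, ((∑ y', ∑ z', w u x y' z') * (∑ u', w u' x y z)) :=
        Finset.sum_congr rfl fun y _ => hMarkov u x y z
      rw [← Finset.sum_mul, ← Finset.mul_sum] at e
      calc (∑ y, w u x y z) * (∑ u', ∑ z', ∑ y, w u' x y z')
          = (∑ y, w u x y z) * (∑ u', ∑ y', ∑ z', w u' x y' z') := by
            congr 1
            exact Finset.sum_congr rfl fun u' _ => sum_comm3 (fun z' y => w u' x y z')
        _ = (∑ y', ∑ z', w u x y' z') * (∑ y, ∑ u', w u' x y z) := e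
        _ = (∑ z', ∑ y, w u x y z') * (∑ u', ∑ y, w u' x y z) := by
            rw [sum_comm3 (fun y' z' => w u x y' z'), sum_comm3 (fun y u' => w u' x y z)]
  have hite0' : ∀ (k : Fin p) x (c : ℝ), 0 ≤ c → (0:ℝ) ≤ (if f x = k then c else 0) := by
    intro k x c hc
    split_ifs
    · exact hc
    · exact le_rfl
  have i1 : (∑ k : Fin p, ∑ y, phi (∑ x, if f x = k then ∑ u, ∑ z, w u x y z else 0))
      ≤ ∑ y, phi (∑ u, ∑ x, ∑ z, w u x y z) := by
    calc (∑ k : Fin p, ∑ y, phi (∑ x, if f x = k then ∑ u, ∑ z, w u x y z else 0))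
        ≤ ∑ y, phi (∑ k : Fin p, ∑ x, if f x = k then ∑ u, ∑ z, w u x y z else 0) :=
          ent_marg _ (fun k y => Finset.sum_nonneg fun x _ => hite0' k x _
            (Finset.sum_nonneg fun u _ => Finset.sum_nonneg fun z _ => hw0 u x y z))
      _ = ∑ y, phi (∑ u, ∑ x, ∑ z, w u x y z) := by
          refine Finset.sum_congr rfl fun y _ => ?_
          rw [sum_comm3 (fun (k : Fin p) x => if f x = k then ∑ u, ∑ z, w u x y z else 0)]
          rw [Finset.sum_congr rfl fun x _ => sum_fin_ite (f x) (∑ u, ∑ z, w u x y z)]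
          rw [sw12₃ (fun x u z => w u x y z)]
  have i2 : (∑ k : Fin p, ∑ u, ∑ z, phi (∑ x, if f x = k then ∑ y, w u x y z else 0))
      ≤ ∑ u, ∑ z, phi (∑ x, ∑ y, w u x y z) := by
    rw [sw12₃ (fun (k : Fin p) u z => phi (∑ x, if f x = k then ∑ y, w u x y z else 0))]
    refine Finset.sum_le_sum fun u _ => ?_
    calc (∑ k : Fin p, ∑ z, phi (∑ x, if f x = k then ∑ y, w u x y z else 0))
        ≤ ∑ z, phi (∑ k : Fin p, ∑ x, if f x = k then ∑ y, w u x y z else 0) :=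
          ent_marg _ (fun k z => Finset.sum_nonneg fun x _ => hite0' k x _
            (Finset.sum_nonneg fun y _ => hw0 u x y z))
      _ = ∑ z, phi (∑ x, ∑ y, w u x y z) := by
          refine Finset.sum_congr rfl fun z _ => ?_
          rw [sum_comm3 (fun (k : Fin p) x => if f x = k then ∑ y, w u x y z else 0)]
          rw [Finset.sum_congr rfl fun x _ => sum_fin_ite (f x) (∑ y, w u x y z)]
  have i3 : (∑ z, phi (∑ u, ∑ x, ∑ y, w u x y z))
      - (∑ k : Fin p, ∑ z, phi (∑ x, if f x = k then ∑ u, ∑ y, w u x y z else 0))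
      ≤ Real.logb 2 p := by
    have key : ∀ z, phi (∑ u, ∑ x, ∑ y, w u x y z)
        - (∑ k : Fin p, phi (∑ x, if f x = k then ∑ u, ∑ y, w u x y z else 0))
        ≤ (∑ u, ∑ x, ∑ y, w u x y z) * Real.logb 2 p := by
      intro z
      have hs := ent_slice (fun k : Fin p => ∑ x, if f x = k then ∑ u, ∑ y, w u x y z else 0)
        (fun k => Finset.sum_nonneg fun x _ => hite0' k x _
          (Finset.sum_nonneg fun u _ => Finset.sum_nonneg fun y _ => hw0 u x y z))
      rw [Fintype.card_fin] at hs
      rw [show (∑ k : Fin p, ∑ x, if f x = k then ∑ u, ∑ y, w u x y z else 0)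
          = ∑ u, ∑ x, ∑ y, w u x y z from by
        rw [sum_comm3 (fun (k : Fin p) x => if f x = k then ∑ u, ∑ y, w u x y z else 0)]
        rw [Finset.sum_congr rfl fun x _ => sum_fin_ite (f x) (∑ u, ∑ y, w u x y z)]
        rw [sw12₃ (fun x u y => w u x y z)]] at hs
      exact hs
    calc (∑ z, phi (∑ u, ∑ x, ∑ y, w u x y z))
        - (∑ k : Fin p, ∑ z, phi (∑ x, if f x = k then ∑ u, ∑ y, w u x y z else 0))
        = ∑ z, (phi (∑ u, ∑ x, ∑ y, w u x y z)
            - (∑ k : Fin p, phi (∑ x, if f x = k then ∑ u, ∑ y, w u x y z else 0))) := by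
          rw [Finset.sum_sub_distrib]
          congr 1
          exact sum_comm3 (fun (k : Fin p) z => phi (∑ x, if f x = k then ∑ u, ∑ y, w u x y z else 0))
      _ ≤ ∑ z, (∑ u, ∑ x, ∑ y, w u x y z) * Real.logb 2 p := Finset.sum_le_sum fun z _ => key z
      _ = Real.logb 2 p := by
          rw [← Finset.sum_mul]
          rw [show (∑ z, ∑ u, ∑ x, ∑ y, w u x y z) = 1 from by
            rw [sw12₄ (fun z u x y => w u x y z), sw23₄ (fun u z x y => w u x y z),
              sw34₄ (fun u x z y => w u x y z)]
            exact hw1]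
          rw [one_mul]
  have i4 : (∑ u, ∑ y, phi (∑ x, ∑ z, w u x y z))
      - (∑ k : Fin p, ∑ u, ∑ y, phi (∑ x, if f x = k then ∑ z, w u x y z else 0))
      ≤ Real.logb 2 p := by
    have key : ∀ u y, phi (∑ x, ∑ z, w u x y z)
        - (∑ k : Fin p, phi (∑ x, if f x = k then ∑ z, w u x y z else 0))
        ≤ (∑ x, ∑ z, w u x y z) * Real.logb 2 p := by
      intro u y
      have hs := ent_slice (fun k : Fin p => ∑ x, if f x = k then ∑ z, w u x y z else 0)
        (fun k => Finset.sum_nonneg fun x _ => hite0' k x _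
          (Finset.sum_nonneg fun z _ => hw0 u x y z))
      rw [Fintype.card_fin] at hs
      rw [show (∑ k : Fin p, ∑ x, if f x = k then ∑ z, w u x y z else 0)
          = ∑ x, ∑ z, w u x y z from by
        rw [sum_comm3 (fun (k : Fin p) x => if f x = k then ∑ z, w u x y z else 0)]
        rw [Finset.sum_congr rfl fun x _ => sum_fin_ite (f x) (∑ z, w u x y z)]] at hs
      exact hs
    calc (∑ u, ∑ y, phi (∑ x, ∑ z, w u x y z))
        - (∑ k : Fin p, ∑ u, ∑ y, phi (∑ x, if f x = k then ∑ z, w u x y z else 0))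
        = ∑ u, ∑ y, (phi (∑ x, ∑ z, w u x y z)
            - (∑ k : Fin p, phi (∑ x, if f x = k then ∑ z, w u x y z else 0))) := by
          simp only [Finset.sum_sub_distrib]
          congr 1
          rw [sw12₃ (fun (k : Fin p) u y => phi (∑ x, if f x = k then ∑ z, w u x y z else 0)),
            sw23₃ (fun u (k : Fin p) y => phi (∑ x, if f x = k then ∑ z, w u x y z else 0))]
      _ ≤ ∑ u, ∑ y, (∑ x, ∑ z, w u x y z) * Real.logb 2 p :=
          Finset.sum_le_sum fun u _ => Finset.sum_le_sum fun y _ => key u y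
      _ = Real.logb 2 p := by
          simp only [← Finset.sum_mul]
          rw [show (∑ u, ∑ y, ∑ x, ∑ z, w u x y z) = 1 from by
            rw [sw23₄ (fun u y x z => w u x y z)]
            exact hw1]
          rw [one_mul]
  have main : mi (fun u y => ∑ x, ∑ z, w u x y z) - mi (fun u z => ∑ x, ∑ y, w u x y z)
      ≤ (∑ k : Fin p, (∑ u, ∑ x, ∑ y, ∑ z, if f x = k then w u x y z else 0) * F k)
        + 2 * Real.logb 2 (p:ℝ) := by
    rw [Finset.sum_congr rfl fun k _ => h3 k]
    simp only [Finset.sum_add_distrib, Finset.sum_sub_distrib]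
    rw [h4a, h4b, h4c, h4d, h1, h2]
    linarith [h5y, h5z, i1, i2, i3, i4]
  have hmass : (∑ k : Fin p, ∑ u, ∑ x, ∑ y, ∑ z, if f x = k then w u x y z else 0) = 1 := by
    rw [sum_comm3 (fun (k : Fin p) u => ∑ x, ∑ y, ∑ z, if f x = k then w u x y z else 0)]
    rw [Finset.sum_congr rfl fun u _ =>
      sum_comm3 (fun (k : Fin p) x => ∑ y, ∑ z, if f x = k then w u x y z else 0)]
    rw [Finset.sum_congr rfl fun u _ => Finset.sum_congr rfl fun x _ =>
      sum_comm3 (fun (k : Fin p) y => ∑ z, if f x = k then w u x y z else 0)]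
    rw [Finset.sum_congr rfl fun u _ => Finset.sum_congr rfl fun x _ =>
      Finset.sum_congr rfl fun y _ =>
        sum_comm3 (fun (k : Fin p) z => if f x = k then w u x y z else 0)]
    rw [Finset.sum_congr rfl fun u _ => Finset.sum_congr rfl fun x _ =>
      Finset.sum_congr rfl fun y _ => Finset.sum_congr rfl fun z _ =>
        sum_fin_ite (f x) (w u x y z)]
    exact hw1
  have favg : (∑ k : Fin p, (∑ u, ∑ x, ∑ y, ∑ z, if f x = k then w u x y z else 0) * F k)
      ≤ Finset.univ.sup' ⟨⟨0, hp⟩, Finset.mem_univ _⟩ F := by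
    calc (∑ k : Fin p, (∑ u, ∑ x, ∑ y, ∑ z, if f x = k then w u x y z else 0) * F k)
        ≤ ∑ k : Fin p, (∑ u, ∑ x, ∑ y, ∑ z, if f x = k then w u x y z else 0) *
            (Finset.univ.sup' ⟨⟨0, hp⟩, Finset.mem_univ _⟩ F) :=
          Finset.sum_le_sum fun k _ =>
            mul_le_mul_of_nonneg_left (Finset.le_sup' F (mem_univ k)) (hP0 k)
      _ = _ := by rw [← Finset.sum_mul, hmass, one_mul]
  exact le_trans main (add_le_add_left favg _)
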